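/- Fix a constant C > 0, a constant c ∈ (0,1), and a function ω : (0,∞) → ℝ with ω(β) → ∞ and ω(β)/log log β → 0 as β → ∞. Then there exist constants c₁, c₂ > 0 and N ∈ ℕ such that for every integer n ≥ N and every real β with n^c ≤ β ≤ n^{2−c}: c₁·√(log β) ≤ ∫_T exp(−C·n·β^{−3/2}·t²·e^{−t²/2}) dt ≤ c₂·√(log β). -/

import Mathlib

open MeasureTheory Real Set Filter
open scoped BigOperators

private lemma le_sq_sqrt' (x : ℝ) : x ≤ Real.sqrt x ^ 2 := by
  rcases le_or_gt 0 x with h | h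
  · rw [Real.sq_sqrt h]
  · exact h.le.trans (sq_nonneg _)

set_option maxHeartbeats 1600000 in
/-- For fixed `C > 0`, `c ∈ (0,1)` and `ω` with `ω(β) → ∞`,
`ω(β)/log log β → 0`, there are `c₁, c₂ > 0` and `N` such that for all `n ≥ N` and
`n^c ≤ β ≤ n^(2−c)`, the integral `∫_T exp(−C·n·β^(−3/2)·t²·e^(−t²/2)) dt` over
`T = [−√(2 log n − log β − ω β), √(2 log n − log β − ω β)]` is of order `√(log β)`. -/
theorem integral_exp_At_over_T (C : ℝ) (hC : 0 < C) (c : ℝ) (hc0 : 0 < c)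
    (hc1 : c < 1) (ω : ℝ → ℝ) (hω₁ : Tendsto ω atTop atTop)
    (hω₂ : Tendsto (fun β => ω β / Real.log (Real.log β)) atTop (nhds 0)) :
    ∃ c₁ > (0 : ℝ), ∃ c₂ > (0 : ℝ), ∃ N : ℕ, ∀ n : ℕ, N ≤ n → ∀ β : ℝ,
      (n : ℝ) ^ c ≤ β → β ≤ (n : ℝ) ^ (2 - c) →
      c₁ * Real.sqrt (Real.log β) ≤
          (∫ t in Set.Icc (-(Real.sqrt (2 * Real.log n - Real.log β - ω β)))
              (Real.sqrt (2 * Real.log n - Real.log β - ω β)),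
            Real.exp (-C * n * β ^ (-(3 : ℝ) / 2) * t ^ 2 * Real.exp (-t ^ 2 / 2))) ∧
      (∫ t in Set.Icc (-(Real.sqrt (2 * Real.log n - Real.log β - ω β)))
          (Real.sqrt (2 * Real.log n - Real.log β - ω β)),
        Real.exp (-C * n * β ^ (-(3 : ℝ) / 2) * t ^ 2 * Real.exp (-t ^ 2 / 2))) ≤
        c₂ * Real.sqrt (Real.log β) := by
  -- eventual facts about ω
  have hβev : ∀ᶠ β : ℝ in atTop, 0 ≤ ω β ∧ ω β ≤ c / 4 * Real.log β := by
    filter_upwards [hω₁.eventually_ge_atTop 0,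
      hω₂.eventually (gt_mem_nhds one_pos),
      Real.tendsto_log_atTop.eventually_ge_atTop (max 2 (64 / c ^ 2))] with β h0 h1 h2
    have hL2 : (2 : ℝ) ≤ Real.log β := le_trans (le_max_left _ _) h2
    have hL64 : 64 / c ^ 2 ≤ Real.log β := le_trans (le_max_right _ _) h2
    have hLpos : (0 : ℝ) < Real.log β := by linarith
    have hllpos : 0 < Real.log (Real.log β) := Real.log_pos (by linarith)
    have hωlt : ω β < Real.log (Real.log β) := by
      have := (div_lt_one hllpos).mp h1
      linarith
    have h3 : Real.log (Real.log β) ≤ 2 * Real.sqrt (Real.log β) := by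
      have hls : Real.log (Real.sqrt (Real.log β)) = Real.log (Real.log β) / 2 :=
        Real.log_sqrt hLpos.le
      have hle := Real.log_le_sub_one_of_pos (Real.sqrt_pos.mpr hLpos)
      nlinarith [Real.sqrt_nonneg (Real.log β)]
    have h4 : 2 * Real.sqrt (Real.log β) ≤ c / 4 * Real.log β := by
      have h8 : (8 : ℝ) / c ≤ Real.sqrt (Real.log β) := by
        rw [show (8 : ℝ) / c = Real.sqrt ((8 / c) ^ 2) from (Real.sqrt_sq (by positivity)).symm]
        apply Real.sqrt_le_sqrt
        calc (8 / c) ^ 2 = 64 / c ^ 2 := by ring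
          _ ≤ Real.log β := hL64
      have hs := Real.sq_sqrt hLpos.le
      have h8' : (8 : ℝ) ≤ Real.sqrt (Real.log β) * c := (div_le_iff₀ hc0).mp h8
      nlinarith [mul_le_mul_of_nonneg_right h8' (Real.sqrt_nonneg (Real.log β))]
    exact ⟨h0, by linarith⟩
  obtain ⟨M₀, hM₀⟩ := eventually_atTop.mp hβev
  -- eventual facts about n
  have hnc : Tendsto (fun n : ℕ => (n : ℝ) ^ c) atTop atTop :=
    (tendsto_rpow_atTop hc0).comp tendsto_natCast_atTop_atTop
  have hnc4 : Tendsto (fun n : ℕ => (n : ℝ) ^ (c / 4)) atTop atTop :=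
    (tendsto_rpow_atTop (by linarith)).comp tendsto_natCast_atTop_atTop
  have hlog2pos : (0 : ℝ) < Real.log 2 := Real.log_pos (by norm_num)
  have hE3 : ∀ᶠ n : ℕ in atTop,
      2 * C * Real.log n ≤ Real.log 2 * (n : ℝ) ^ (c / 2) := by
    filter_upwards [hnc4.eventually_ge_atTop (8 * C / (c * Real.log 2)),
      eventually_ge_atTop 1] with n hK hn1
    have hx1 : (1 : ℝ) ≤ (n : ℝ) := by exact_mod_cast hn1
    have hxpos : (0 : ℝ) < (n : ℝ) := by linarith
    have hlx : Real.log ((n : ℝ) ^ (c / 4)) = c / 4 * Real.log n := Real.log_rpow hxpos _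
    have hlb : Real.log ((n : ℝ) ^ (c / 4)) ≤ (n : ℝ) ^ (c / 4) :=
      (Real.log_le_sub_one_of_pos (Real.rpow_pos_of_pos hxpos _)).trans (by linarith)
    have hlogle : Real.log n ≤ 4 / c * (n : ℝ) ^ (c / 4) := by
      rw [hlx] at hlb
      have := mul_le_mul_of_nonneg_left hlb (by positivity : (0:ℝ) ≤ 4 / c)
      calc Real.log n = 4 / c * (c / 4 * Real.log n) := by field_simp
        _ ≤ 4 / c * (n : ℝ) ^ (c / 4) := this
    have hmul : (n : ℝ) ^ (c / 4) * (n : ℝ) ^ (c / 4) = (n : ℝ) ^ (c / 2) := by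
      rw [← Real.rpow_add hxpos, show c / 4 + c / 4 = c / 2 by ring]
    have h1 : 2 * C * Real.log n ≤ 8 * C / c * (n : ℝ) ^ (c / 4) := by
      have := mul_le_mul_of_nonneg_left hlogle (by positivity : (0:ℝ) ≤ 2 * C)
      calc 2 * C * Real.log n ≤ 2 * C * (4 / c * (n : ℝ) ^ (c / 4)) := this
        _ = 8 * C / c * (n : ℝ) ^ (c / 4) := by ring
    have h2 : 8 * C / c * (n : ℝ) ^ (c / 4) ≤ Real.log 2 * (n : ℝ) ^ (c / 2) := by
      have hKC : 8 * C / c = Real.log 2 * (8 * C / (c * Real.log 2)) := by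
        field_simp
      rw [hKC, ← hmul]
      have hnn : (0 : ℝ) ≤ (n : ℝ) ^ (c / 4) := (Real.rpow_pos_of_pos hxpos _).le
      calc Real.log 2 * (8 * C / (c * Real.log 2)) * (n : ℝ) ^ (c / 4)
          ≤ Real.log 2 * (n : ℝ) ^ (c / 4) * (n : ℝ) ^ (c / 4) := by
            apply mul_le_mul_of_nonneg_right _ hnn
            exact mul_le_mul_of_nonneg_left hK hlog2pos.le
        _ = Real.log 2 * ((n : ℝ) ^ (c / 4) * (n : ℝ) ^ (c / 4)) := by ring
    linarith
  have hNev : ∀ᶠ n : ℕ in atTop, 3 ≤ n ∧ M₀ ≤ (n : ℝ) ^ c ∧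
      2 * C * Real.log n ≤ Real.log 2 * (n : ℝ) ^ (c / 2) := by
    filter_upwards [eventually_ge_atTop 3, hnc.eventually_ge_atTop M₀, hE3] with n h1 h2 h3
    exact ⟨h1, h2, h3⟩
  obtain ⟨N, hN⟩ := eventually_atTop.mp hNev
  refine ⟨c / 16 * Real.sqrt (c / 2), by positivity, 2 * Real.sqrt (2 / c), by positivity,
    N, fun n hn β hβ1 hβ2 => ?_⟩
  obtain ⟨hn3, hMn, hE3n⟩ := hN n hn
  have hnR : (3 : ℝ) ≤ (n : ℝ) := by exact_mod_cast hn3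
  have hnpos : (0 : ℝ) < (n : ℝ) := by linarith
  have hβpos : (0 : ℝ) < β := lt_of_lt_of_le (Real.rpow_pos_of_pos hnpos c) hβ1
  obtain ⟨hω0, hωle⟩ := hM₀ β (le_trans hMn hβ1)
  set L := Real.log β with hLdef
  set ln := Real.log (n : ℝ) with hlndef
  have hcL : c * ln ≤ L := by
    rw [hLdef, hlndef, ← Real.log_rpow hnpos]
    exact Real.log_le_log (Real.rpow_pos_of_pos hnpos c) hβ1
  have hL2c : L ≤ (2 - c) * ln := by
    rw [hLdef, hlndef, ← Real.log_rpow hnpos]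
    exact Real.log_le_log hβpos hβ2
  have hln1 : (1 : ℝ) ≤ ln := by
    rw [hlndef, show (1:ℝ) = Real.log (Real.exp 1) from (Real.log_exp 1).symm]
    exact Real.log_le_log (Real.exp_pos 1)
      (le_trans (le_of_lt (lt_trans Real.exp_one_lt_d9 (by norm_num))) hnR)
  have hlnpos : (0 : ℝ) < ln := by linarith
  have hLpos : (0 : ℝ) < L := lt_of_lt_of_le (by positivity) hcL
  have hkey : c / 4 * L ≤ 2 * ln - L - ω β := by
    have h2 : L / 2 ≤ ln := by nlinarith
    nlinarith [mul_le_mul_of_nonneg_left h2 hc0.le]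
  set b := Real.sqrt (2 * ln - L - ω β) with hbdef
  have hbnn : (0 : ℝ) ≤ b := Real.sqrt_nonneg _
  have hbpos : (0 : ℝ) < b := Real.sqrt_pos.mpr (by nlinarith)
  have hb2 : b ^ 2 = 2 * ln - L - ω β := Real.sq_sqrt (by nlinarith)
  have hb2le : b ^ 2 ≤ 2 * ln := by rw [hb2]; linarith
  set SL := Real.sqrt L with hSLdef
  have hSL2 : SL ^ 2 = L := Real.sq_sqrt hLpos.le
  have hSLnn : (0 : ℝ) ≤ SL := Real.sqrt_nonneg _
  have hble : b ≤ Real.sqrt (2 / c) * SL := by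
    have h2ln : 2 * ln ≤ 2 / c * L := by
      rw [div_mul_eq_mul_div, le_div_iff₀ hc0]; nlinarith
    rw [hSLdef, ← Real.sqrt_mul (by positivity)]
    apply Real.sqrt_le_sqrt
    linarith
  set a := Real.sqrt (2 * ln - 2 * L) with hadef
  have hann : (0 : ℝ) ≤ a := Real.sqrt_nonneg _
  have ha2ge : 2 * ln - 2 * L ≤ a ^ 2 := le_sq_sqrt' _
  have ha2le : a ^ 2 + c / 4 * L ≤ b ^ 2 := by
    rcases le_or_gt 0 (2 * ln - 2 * L) with h | h
    · rw [Real.sq_sqrt h, hb2]; nlinarith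
    · rw [hadef, Real.sqrt_eq_zero'.mpr h.le]; rw [hb2]; nlinarith
  have hab : a ≤ b := by nlinarith
  -- lower bound on b - a
  have hprod : Real.sqrt (c / 2) * Real.sqrt (2 / c) = 1 := by
    rw [← Real.sqrt_mul (by positivity), show c / 2 * (2 / c) = 1 by field_simp]
    exact Real.sqrt_one
  have hba : c / 8 * Real.sqrt (c / 2) * SL ≤ b - a := by
    have hX : (0 : ℝ) ≤ c / 8 * Real.sqrt (c / 2) * SL := by positivity
    have f3 : a + b ≤ 2 * (Real.sqrt (2 / c) * SL) := by linarith
    have h1 := mul_le_mul_of_nonneg_left f3 hX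
    have h2 : c / 8 * Real.sqrt (c / 2) * SL * (2 * (Real.sqrt (2 / c) * SL))
        = c / 4 * (Real.sqrt (c / 2) * Real.sqrt (2 / c)) * SL ^ 2 := by ring
    have h3 : c / 4 * L ≤ (b - a) * (a + b) := by nlinarith
    have h4 : (0 : ℝ) < a + b := by linarith
    apply le_of_mul_le_mul_right _ h4
    calc c / 8 * Real.sqrt (c / 2) * SL * (a + b)
        ≤ c / 4 * (Real.sqrt (c / 2) * Real.sqrt (2 / c)) * SL ^ 2 := by rw [← h2]; exact h1
      _ = c / 4 * L := by rw [hprod, hSL2]; ring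
      _ ≤ (b - a) * (a + b) := h3
  -- the integrand
  set f : ℝ → ℝ := fun t => Real.exp (-C * n * β ^ (-(3 : ℝ) / 2) * t ^ 2 * Real.exp (-t ^ 2 / 2))
    with hfdef
  have hfc : Continuous f := by fun_prop
  have hfnn : ∀ t, 0 ≤ f t := fun t => (Real.exp_pos _).le
  -- pointwise lower bound on [a, b]
  have hhalf : ∀ t ∈ Set.Icc a b, (1 : ℝ) / 2 ≤ f t := by
    intro t ht
    obtain ⟨hta, htb⟩ := ht
    have ht2b : t ^ 2 ≤ b ^ 2 := by nlinarith
    have hta2 : a ^ 2 ≤ t ^ 2 := by nlinarith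
    have hXle : C * n * β ^ (-(3 : ℝ) / 2) * t ^ 2 * Real.exp (-t ^ 2 / 2) ≤ Real.log 2 := by
      have e1 : Real.exp (-t ^ 2 / 2) ≤ Real.exp (L - ln) := by
        apply Real.exp_le_exp.mpr; linarith
      have e2 : (n : ℝ) * Real.exp (L - ln) = β := by
        rw [Real.exp_sub, hLdef, hlndef, Real.exp_log hβpos, Real.exp_log hnpos]
        field_simp
      have e3 : β ^ (-(3 : ℝ) / 2) * β = β ^ (-(1 : ℝ) / 2) := by
        rw [show (-(1:ℝ)/2) = -(3:ℝ)/2 + 1 by norm_num, Real.rpow_add_one hβpos.ne']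
      have e4 : β ^ (-(1 : ℝ) / 2) ≤ ((n : ℝ) ^ c) ^ (-(1 : ℝ) / 2) :=
        Real.rpow_le_rpow_of_nonpos (by positivity) hβ1 (by norm_num)
      have e5 : ((n : ℝ) ^ c) ^ (-(1 : ℝ) / 2) = ((n : ℝ) ^ (c / 2))⁻¹ := by
        rw [← Real.rpow_mul hnpos.le, show c * (-(1 : ℝ) / 2) = -(c / 2) by ring,
          Real.rpow_neg hnpos.le]
      calc C * n * β ^ (-(3 : ℝ) / 2) * t ^ 2 * Real.exp (-t ^ 2 / 2)
          ≤ C * n * β ^ (-(3 : ℝ) / 2) * b ^ 2 * Real.exp (L - ln) := by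
            apply mul_le_mul _ e1 (Real.exp_pos _).le (by positivity)
            exact mul_le_mul_of_nonneg_left ht2b (by positivity)
        _ = C * b ^ 2 * (β ^ (-(3 : ℝ) / 2) * ((n : ℝ) * Real.exp (L - ln))) := by ring
        _ = C * b ^ 2 * β ^ (-(1 : ℝ) / 2) := by rw [e2, e3]
        _ ≤ C * (2 * ln) * ((n : ℝ) ^ c) ^ (-(1 : ℝ) / 2) := by
            apply mul_le_mul _ e4 (by positivity) (mul_nonneg hC.le (by linarith))
            exact mul_le_mul_of_nonneg_left hb2le hC.le
        _ ≤ Real.log 2 := by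
            rw [e5, ← div_eq_mul_inv, div_le_iff₀ (Real.rpow_pos_of_pos hnpos _)]
            linarith [hE3n]
    simp only [hfdef]
    calc (1 : ℝ) / 2 = Real.exp (-Real.log 2) := by
          rw [Real.exp_neg, Real.exp_log (by norm_num : (0:ℝ) < 2)]; norm_num
      _ ≤ Real.exp (-C * n * β ^ (-(3 : ℝ) / 2) * t ^ 2 * Real.exp (-t ^ 2 / 2)) :=
          Real.exp_le_exp.mpr (by nlinarith [hXle])
  constructor
  · -- lower bound
    have step2 : (1 : ℝ) / 2 * (volume (Set.Icc a b)).toReal ≤ ∫ t in Set.Icc a b, f t :=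
      setIntegral_ge_of_const_le_real measurableSet_Icc
        (by rw [Real.volume_Icc]; exact ENNReal.ofReal_ne_top)
        hhalf hfc.integrableOn_Icc
    have step1 : (∫ t in Set.Icc a b, f t) ≤ ∫ t in Set.Icc (-b) b, f t := by
      apply setIntegral_mono_set hfc.integrableOn_Icc
        (Filter.Eventually.of_forall hfnn)
      exact HasSubset.Subset.eventuallyLE (Set.Icc_subset_Icc (by linarith) le_rfl)
    have hvol : (volume (Set.Icc a b)).toReal = b - a := by
      rw [Real.volume_Icc, ENNReal.toReal_ofReal (by linarith)]
    rw [hvol] at step2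
    calc c / 16 * Real.sqrt (c / 2) * SL = 1 / 2 * (c / 8 * Real.sqrt (c / 2) * SL) := by ring
      _ ≤ 1 / 2 * (b - a) := by linarith
      _ ≤ ∫ t in Set.Icc a b, f t := step2
      _ ≤ _ := step1
  · -- upper bound
    have hone : (∫ t in Set.Icc (-b) b, f t) ≤ ∫ t in Set.Icc (-b) b, (1 : ℝ) := by
      apply setIntegral_mono_on hfc.integrableOn_Icc
        (integrableOn_const (by rw [Real.volume_Icc]; exact ENNReal.ofReal_ne_top))
        measurableSet_Icc
      intro t ht
      simp only [hfdef]
      apply Real.exp_le_one_iff.mpr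
      have h0 : (0 : ℝ) ≤ C * n * β ^ (-(3 : ℝ) / 2) * t ^ 2 * Real.exp (-t ^ 2 / 2) := by
        positivity
      nlinarith
    have hconst : (∫ t in Set.Icc (-b) b, (1 : ℝ)) = 2 * b := by
      rw [setIntegral_const, Real.volume_real_Icc_of_le (by linarith), smul_eq_mul]
      ring
    calc (∫ t in Set.Icc (-b) b, f t) ≤ 2 * b := by rw [← hconst]; exact hone
      _ ≤ 2 * (Real.sqrt (2 / c) * SL) := by linarith
      _ = 2 * Real.sqrt (2 / c) * SL := by ring
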